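/- Let G be a finite group, Y a Banach space, Ỹ = ℓ²(ℕ, Y), and π the left regular representation of G on ℓ²(G, Ỹ). For any nonzero η ∈ ℓ²(G, Ỹ)₀ (the subspace of functions with zero sum), sup_{γ ∈ G} ‖η − π(γ)η‖ > ‖η‖. -/

import Mathlib

/-- `ℓ²(G, Ỹ)` with `Ỹ = ℓ²(ℕ, Y)`, for a finite group `G`. -/
noncomputable abbrev L2G (G Y : Type*) [Fintype G] [NormedAddCommGroup Y] :=
  PiLp 2 (fun _ : G => lp (fun _ : ℕ => Y) 2)

/-- The left regular representation: `(π(γ)ξ)(x) = ξ(γ⁻¹ x)`. -/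
noncomputable def leftReg {G Y : Type*} [Group G] [Fintype G] [NormedAddCommGroup Y]
    (γ : G) (ξ : L2G G Y) : L2G G Y := WithLp.toLp 2 (fun x => ξ (γ⁻¹ * x))

/-- Let `G` be a finite group, `Y` a Banach space, `Ỹ = ℓ²(ℕ,Y)`, and `π` the left
regular representation on `ℓ²(G,Ỹ)`.  For any nonzero `η` in the zero-sum subspace
`ℓ²(G,Ỹ)₀`, we have `sup_{γ∈G} ‖η − π(γ)η‖ > ‖η‖`. -/
theorem displacement_gt_norm {G Y : Type*} [Group G] [Fintype G]
    [NormedAddCommGroup Y] [NormedSpace ℝ Y] [CompleteSpace Y]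
    (η : L2G G Y) (hzero : ∑ x : G, η x = 0) (hne : η ≠ 0) :
    ‖η‖ < ⨆ γ : G, ‖η - leftReg γ η‖ := by
  by_contra h
  push_neg at h
  have hb : ∀ γ : G, ‖η - leftReg γ η‖ ≤ ‖η‖ := fun γ =>
    le_trans (le_ciSup (f := fun γ : G => ‖η - leftReg γ η‖) (Finite.bddAbove_range _) γ) h
  -- averaging: ∑ γ, leftReg γ η = 0
  have hav : ∑ γ : G, leftReg γ η = 0 := by
    rw [WithLp.ext_iff]; funext x
    have : (∑ γ : G, leftReg γ η) x = ∑ γ : G, η (γ⁻¹ * x) := by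
      rw [WithLp.ofLp_sum, Finset.sum_apply]; rfl
    rw [this]
    have := Fintype.sum_equiv ((Equiv.inv G).trans (Equiv.mulRight x))
      (fun γ : G => η (γ⁻¹ * x)) (fun y : G => η y) (fun γ => rfl)
    rw [this, hzero]
    rfl
  have hsum : ∑ γ : G, (η - leftReg γ η) = (Fintype.card G : ℝ) • η := by
    rw [Finset.sum_sub_distrib, hav, sub_zero, Finset.sum_const, Finset.card_univ,
      ← Nat.cast_smul_eq_nsmul ℝ]
  have hcard : (Fintype.card G : ℝ) * ‖η‖ = ‖∑ γ : G, (η - leftReg γ η)‖ := by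
    rw [hsum, norm_smul]
    simp
  have h1 : η - leftReg 1 η = 0 := by
    have : leftReg (1 : G) η = η := by
      rw [WithLp.ext_iff]; funext x; show η ((1:G)⁻¹ * x) = η x; rw [inv_one, one_mul]
    rw [this, sub_self]
  have hlt : ∑ γ : G, ‖η - leftReg γ η‖ < ∑ _γ : G, ‖η‖ := by
    apply Finset.sum_lt_sum (fun γ _ => hb γ)
    exact ⟨1, Finset.mem_univ _, by rw [h1, norm_zero]; exact norm_pos_iff.mpr hne⟩
  have : (Fintype.card G : ℝ) * ‖η‖ < (Fintype.card G : ℝ) * ‖η‖ := by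
    calc (Fintype.card G : ℝ) * ‖η‖ = ‖∑ γ : G, (η - leftReg γ η)‖ := hcard
      _ ≤ ∑ γ : G, ‖η - leftReg γ η‖ := norm_sum_le _ _
      _ < ∑ _γ : G, ‖η‖ := hlt
      _ = (Fintype.card G : ℝ) * ‖η‖ := by
          rw [Finset.sum_const, Finset.card_univ, nsmul_eq_mul]
  exact lt_irrefl _ this
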